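/- Let g ∈ R_d be a homogeneous form of degree d, A := S/g^⊥, and t ≤ N. Then dim_k A_1 ≤ t if and only if there exist linear forms ℓ_1,...,ℓ_t ∈ R_1 such that g ∈ k[ℓ_1,...,ℓ_t]. -/

import Mathlib

set_option synthInstance.maxHeartbeats 1000000
set_option maxHeartbeats 1000000

open MvPolynomial

/-- The apolarity action of `S = k[x_1,…,x_N]` on `R = k[y_1,…,y_N]` (`x_i ↦ ∂/∂y_i`). -/
noncomputable def apolar {k : Type*} [Field k] {N : ℕ}
    (f g : MvPolynomial (Fin N) k) : MvPolynomial (Fin N) k :=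
  f.support.sum fun α => g.support.sum fun β =>
    (f.coeff α * g.coeff β * ∏ i, ((β i).descFactorial (α i) : k)) •
      monomial (β - α) (1 : k)

section helpers

variable {k : Type*} [Field k] {N : ℕ}

/-- inner sum of apolar for a fixed `α`. -/
noncomputable def Dmon (α : Fin N →₀ ℕ) (g : MvPolynomial (Fin N) k) : MvPolynomial (Fin N) k :=
  g.support.sum fun β =>
    (g.coeff β * ∏ i, ((β i).descFactorial (α i) : k)) • monomial (β - α) (1 : k)

lemma apolar_eq (f g : MvPolynomial (Fin N) k) :
    apolar f g = f.support.sum fun α => f.coeff α • Dmon α g := by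
  unfold apolar Dmon
  refine Finset.sum_congr rfl fun α _ => ?_
  rw [Finset.smul_sum]
  refine Finset.sum_congr rfl fun β _ => ?_
  rw [mul_assoc, mul_smul]

lemma apolar_eq_of_subset (f g : MvPolynomial (Fin N) k) {T : Finset (Fin N →₀ ℕ)}
    (hT : f.support ⊆ T) :
    apolar f g = T.sum fun α => f.coeff α • Dmon α g := by
  rw [apolar_eq]
  refine Finset.sum_subset hT fun α _ hα => ?_
  rw [notMem_support_iff.mp hα, zero_smul]

lemma Dmon_single (i : Fin N) (g : MvPolynomial (Fin N) k) :
    Dmon (Finsupp.single i 1) g = pderiv i g := by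
  conv_rhs => rw [g.as_sum, map_sum]
  unfold Dmon
  refine Finset.sum_congr rfl fun β _ => ?_
  rw [pderiv_monomial]
  have hprod : (∏ l, (((β l).descFactorial ((Finsupp.single i 1) l)) : k)) = (β i : k) := by
    rw [Fintype.prod_eq_single i]
    · simp
    · intro l hl
      simp [Finsupp.single_apply, (Ne.symm hl : ¬ i = l)]
  rw [hprod, smul_monomial, smul_eq_mul, mul_one]

lemma apolar_sum_smul_X (c : Fin N → k) (g : MvPolynomial (Fin N) k) :
    apolar (∑ i, c i • X i) g = ∑ i, c i • pderiv i g := by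
  have hsub : (∑ i, c i • X i : MvPolynomial (Fin N) k).support ⊆
      Finset.univ.image fun i : Fin N => Finsupp.single i 1 := by
    refine Finset.Subset.trans MvPolynomial.support_sum ?_
    intro α hα
    simp only [Finset.mem_biUnion] at hα
    obtain ⟨i, _, hi⟩ := hα
    have := Finset.mem_of_subset (MvPolynomial.support_smul) hi
    rw [MvPolynomial.support_X] at this
    simp only [Finset.mem_singleton] at this
    subst this
    exact Finset.mem_image_of_mem _ (Finset.mem_univ i)
  rw [apolar_eq_of_subset _ _ hsub, Finset.sum_image (by
    intro a _ b _ h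
    exact (Finsupp.single_left_inj one_ne_zero).mp h)]
  refine Finset.sum_congr rfl fun i _ => ?_
  rw [Dmon_single]
  congr 1
  rw [MvPolynomial.coeff_sum]
  rw [Finset.sum_eq_single i]
  · simp [MvPolynomial.coeff_smul, MvPolynomial.coeff_X]
  · intro j _ hj
    rw [MvPolynomial.coeff_smul, MvPolynomial.coeff_X', if_neg, smul_zero]
    exact fun h => hj ((Finsupp.single_left_inj one_ne_zero).mp h)
  · simp

end helpers


section helpers2
variable {k : Type*} [Field k] {N : ℕ}

noncomputable def Lmap (k : Type*) [Field k] (N : ℕ) : (Fin N → k) →ₗ[k] MvPolynomial (Fin N) k :=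
  ∑ i : Fin N, (LinearMap.toSpanSingleton k _ (X i)).comp (LinearMap.proj i)

lemma Lmap_apply (c : Fin N → k) : Lmap k N c = ∑ i, c i • X i := by
  simp [Lmap, LinearMap.sum_apply, LinearMap.toSpanSingleton_apply]

lemma coeff_Lmap (c : Fin N → k) (i : Fin N) :
    MvPolynomial.coeff (Finsupp.single i 1) (Lmap k N c) = c i := by
  rw [Lmap_apply, MvPolynomial.coeff_sum, Finset.sum_eq_single i]
  · simp [MvPolynomial.coeff_smul, MvPolynomial.coeff_X]
  · intro j _ hj
    rw [MvPolynomial.coeff_smul, MvPolynomial.coeff_X', if_neg, smul_zero]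
    exact fun h => hj ((Finsupp.single_left_inj one_ne_zero).mp h)
  · simp

lemma exists_single_of_degree_one {m : Fin N →₀ ℕ} (hm : Finsupp.degree m = 1) :
    ∃ i, m = Finsupp.single i 1 := by
  classical
  have hsum : ∑ i, m i = 1 := by
    rw [← Finset.sum_subset (Finset.subset_univ m.support)]
    · exact hm
    · intro x _ hx
      exact Finsupp.notMem_support_iff.mp hx
  have hne : ∃ i, m i ≠ 0 := by
    by_contra h
    push_neg at h
    simp [h] at hsum
  obtain ⟨i, hi⟩ := hne
  have hsplit : m i + ∑ j ∈ Finset.univ.erase i, m j = 1 := by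
    rw [Finset.add_sum_erase _ _ (Finset.mem_univ i)]
    exact hsum
  have hmi : m i = 1 := by omega
  have hrest : ∑ j ∈ Finset.univ.erase i, m j = 0 := by omega
  refine ⟨i, ?_⟩
  ext j
  rcases eq_or_ne j i with rfl | hj
  · simp [hmi]
  · rw [Finsupp.single_apply, if_neg (Ne.symm hj)]
    exact (Finset.sum_eq_zero_iff.mp hrest) j (Finset.mem_erase.mpr ⟨hj, Finset.mem_univ j⟩)

lemma eq_Lmap_of_homog {u : MvPolynomial (Fin N) k}
    (hu : u ∈ homogeneousSubmodule (Fin N) k 1) :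
    u = Lmap k N (fun i => MvPolynomial.coeff (Finsupp.single i 1) u) := by
  rw [mem_homogeneousSubmodule] at hu
  apply MvPolynomial.ext
  intro m
  rw [Lmap_apply, MvPolynomial.coeff_sum]
  rcases Classical.em (∃ i, m = Finsupp.single i 1) with ⟨i, rfl⟩ | hnot
  · rw [Finset.sum_eq_single i]
    · simp [MvPolynomial.coeff_smul, MvPolynomial.coeff_X]
    · intro j _ hj
      rw [MvPolynomial.coeff_smul, MvPolynomial.coeff_X', if_neg, smul_zero]
      exact fun h => hj ((Finsupp.single_left_inj one_ne_zero).mp h)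
    · simp
  · have hm : MvPolynomial.coeff m u = 0 := by
      by_contra h
      exact hnot (exists_single_of_degree_one (by rw [Finsupp.degree_eq_weight_one]; exact hu h))
    rw [hm]
    refine (Finset.sum_eq_zero fun j _ => ?_).symm
    rw [MvPolynomial.coeff_smul, MvPolynomial.coeff_X', if_neg, smul_zero]
    exact fun h => hnot ⟨j, h.symm⟩

lemma range_Lmap : LinearMap.range (Lmap k N) = homogeneousSubmodule (Fin N) k 1 := by
  apply le_antisymm
  · rintro _ ⟨c, rfl⟩
    rw [Lmap_apply]
    exact Submodule.sum_mem _ fun i _ => Submodule.smul_mem _ _ (by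
      rw [mem_homogeneousSubmodule]; exact isHomogeneous_X k i)
  · intro u hu
    exact ⟨_, (eq_Lmap_of_homog hu).symm⟩

lemma fs_add_sub_single (τ : Fin N →₀ ℕ) (j : Fin N) :
    τ + Finsupp.single j 1 - Finsupp.single j 1 = τ := by
  ext l
  simp only [Finsupp.coe_tsub, Pi.sub_apply, Finsupp.add_apply, Finsupp.single_apply]
  split_ifs <;> omega

lemma fs_sub_add_single {m : Fin N →₀ ℕ} {j : Fin N} (h : m j ≠ 0) :
    m - Finsupp.single j 1 + Finsupp.single j 1 = m := by
  ext l
  simp only [Finsupp.add_apply, Finsupp.coe_tsub, Pi.sub_apply, Finsupp.single_apply]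
  rcases eq_or_ne j l with rfl | hl
  · rw [if_pos rfl]
    omega
  · rw [if_neg hl]
    omega

lemma fs_add_single_apply (τ : Fin N →₀ ℕ) (j : Fin N) :
    ((τ + Finsupp.single j 1) : Fin N →₀ ℕ) j = τ j + 1 := by
  simp

lemma coeff_pderiv (j : Fin N) (p : MvPolynomial (Fin N) k) (τ : Fin N →₀ ℕ) :
    MvPolynomial.coeff τ (pderiv j p) = (τ j + 1 : ℕ) * MvPolynomial.coeff (τ + Finsupp.single j 1) p := by
  classical
  induction p using MvPolynomial.induction_on' with
  | add p q hp hq => rw [map_add, MvPolynomial.coeff_add, MvPolynomial.coeff_add, hp, hq, mul_add]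
  | monomial s a =>
    rw [pderiv_monomial, MvPolynomial.coeff_monomial, MvPolynomial.coeff_monomial]
    rcases eq_or_ne s (τ + Finsupp.single j 1) with rfl | hs
    · rw [if_pos (fs_add_sub_single τ j), if_pos rfl, fs_add_single_apply]
      push_cast
      ring
    · rw [if_neg hs]
      rcases eq_or_ne (s - Finsupp.single j 1) τ with heq | hne
      · rw [if_pos heq]
        have hsj : s j = 0 := by
          by_contra h
          exact hs (by rw [← heq, fs_sub_add_single h])
        rw [hsj]
        simp
      · rw [if_neg hne, mul_zero]

lemma not_mem_vars_of_pderiv_eq_zero [CharZero k] {j : Fin N} {p : MvPolynomial (Fin N) k}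
    (h : pderiv j p = 0) : j ∉ p.vars := by
  intro hj
  rw [MvPolynomial.mem_vars] at hj
  obtain ⟨m, hm, hjm⟩ := hj
  have hmj : m j ≠ 0 := Finsupp.mem_support_iff.mp hjm
  have key := coeff_pderiv j p (m - Finsupp.single j 1)
  rw [h] at key
  rw [fs_sub_add_single hmj] at key
  have : MvPolynomial.coeff m p = 0 := by
    have hne : (((m - Finsupp.single j 1) : Fin N →₀ ℕ) j + 1 : ℕ) ≠ 0 := by omega
    have := key.symm
    rw [MvPolynomial.coeff_zero] at this
    exact (mul_eq_zero.mp this).resolve_left (Nat.cast_ne_zero.mpr hne)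
  exact (Finsupp.mem_support_iff.mp hm) this


lemma pderiv_Lmap (c : Fin N → k) (i : Fin N) :
    pderiv i (Lmap k N c) = C (c i) := by
  classical
  rw [Lmap_apply, map_sum, Finset.sum_eq_single i]
  · rw [Derivation.map_smul, pderiv_X_self, smul_eq_C_mul, mul_one]
  · intro l _ hl
    rw [Derivation.map_smul, pderiv_X_of_ne hl, smul_zero]
  · simp

end helpers2


section helpers3
variable {k : Type*} [Field k] {N : ℕ}

lemma pderiv_aeval (σf : Fin N → MvPolynomial (Fin N) k) (r : Fin N)
    (f : MvPolynomial (Fin N) k) :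
    pderiv r (aeval σf f) = ∑ i, aeval σf (pderiv i f) * pderiv r (σf i) := by
  classical
  induction f using MvPolynomial.induction_on with
  | C a => simp
  | add p q hp hq =>
    rw [map_add, map_add, hp, hq, ← Finset.sum_add_distrib]
    refine Finset.sum_congr rfl fun i _ => ?_
    simp only [map_add]
    ring
  | mul_X p j hp =>
    rw [map_mul, aeval_X, pderiv_mul, hp]
    have : ∀ i : Fin N, aeval σf (pderiv i (p * X j)) * pderiv r (σf i) =
        σf j * (aeval σf (pderiv i p) * pderiv r (σf i)) +
        (if i = j then aeval σf p * pderiv r (σf i) else 0) := by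
      intro i
      rw [pderiv_mul, map_add, map_mul, map_mul, aeval_X, add_mul]
      rcases eq_or_ne i j with rfl | hij
      · rw [if_pos rfl, pderiv_X_self, map_one, mul_one]
        ring
      · rw [if_neg hij, pderiv_X_of_ne (Ne.symm hij), map_zero]
        ring
    rw [Finset.sum_congr rfl fun i _ => this i, Finset.sum_add_distrib,
      Finset.sum_ite_eq' Finset.univ j (fun i => aeval σf p * pderiv r (σf i)),
      if_pos (Finset.mem_univ j), ← Finset.mul_sum]
    ring

/-- the linear substitution associated to a matrix -/
noncomputable def sigM (M : Matrix (Fin N) (Fin N) k) : Fin N → MvPolynomial (Fin N) k :=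
  fun i => ∑ l, M i l • X l

lemma sigM_mem (M : Matrix (Fin N) (Fin N) k) (i : Fin N) :
    sigM M i ∈ homogeneousSubmodule (Fin N) k 1 :=
  Submodule.sum_mem _ fun l _ => Submodule.smul_mem _ _ (by
    rw [mem_homogeneousSubmodule]; exact isHomogeneous_X k l)

lemma pderiv_sigM (M : Matrix (Fin N) (Fin N) k) (i r : Fin N) :
    pderiv r (sigM M i) = C (M i r) := by
  classical
  unfold sigM
  rw [map_sum, Finset.sum_eq_single r]
  · rw [Derivation.map_smul, pderiv_X_self, smul_eq_C_mul, mul_one]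
  · intro l _ hl
    rw [Derivation.map_smul, pderiv_X_of_ne hl, smul_zero]
  · simp

lemma pderiv_aeval_sigM (M : Matrix (Fin N) (Fin N) k) (r : Fin N)
    (f : MvPolynomial (Fin N) k) :
    pderiv r (aeval (sigM M) f) = aeval (sigM M) (∑ i, M i r • pderiv i f) := by
  rw [pderiv_aeval, map_sum]
  refine Finset.sum_congr rfl fun i _ => ?_
  rw [pderiv_sigM, map_smul, smul_eq_C_mul, mul_comm]

lemma aeval_sigM_sigM (M M' : Matrix (Fin N) (Fin N) k) (f : MvPolynomial (Fin N) k) :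
    aeval (sigM M') (aeval (sigM M) f) = aeval (sigM (M * M')) f := by
  have key : (fun i => aeval (sigM M') (sigM M i)) = sigM (M * M' : Matrix (Fin N) (Fin N) k) := by
    funext i
    show aeval (sigM M') (∑ l, M i l • X l) = _
    rw [map_sum]
    have h1 : ∀ l, aeval (R := k) (sigM M') (M i l • X l) = ∑ m, (M i l * M' l m) • X m := by
      intro l
      rw [map_smul, aeval_X]
      show M i l • ∑ m, M' l m • X m = _
      rw [Finset.smul_sum]
      exact Finset.sum_congr rfl fun m _ => smul_smul _ _ _
    rw [Finset.sum_congr rfl fun l _ => h1 l, Finset.sum_comm]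
    show _ = ∑ m, (M * M') i m • X m
    refine Finset.sum_congr rfl fun m _ => ?_
    rw [← Finset.sum_smul, Matrix.mul_apply]
  calc aeval (sigM M') (aeval (sigM M) f)
      = ((aeval (sigM M')).comp (aeval (sigM M))) f := rfl
    _ = aeval (fun i => aeval (sigM M') (sigM M i)) f := by rw [comp_aeval]
    _ = aeval (sigM (M * M')) f := by rw [key]

lemma aeval_sigM_one (f : MvPolynomial (Fin N) k) : aeval (sigM (1 : Matrix (Fin N) (Fin N) k)) f = f := by
  classical
  have : sigM (1 : Matrix (Fin N) (Fin N) k) = X := by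
    funext i
    unfold sigM
    rw [Finset.sum_eq_single i]
    · rw [Matrix.one_apply_eq, one_smul]
    · intro l _ hl
      rw [Matrix.one_apply_ne (Ne.symm hl), zero_smul]
    · simp
  rw [this, aeval_X_left_apply]

end helpers3


/-- Let `g ∈ R_d`, `A = S/g^⊥`, `t ≤ N`.  Then `dim_k A_1 ≤ t` iff there are linear forms
`ℓ_1,…,ℓ_t ∈ R_1` with `g ∈ k[ℓ_1,…,ℓ_t]`. -/
theorem stmt_5 (k : Type*) [Field k] [IsAlgClosed k] [CharZero k] (N d t : ℕ) (ht : t ≤ N)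
    (g : MvPolynomial (Fin N) k) (hgd : g ∈ homogeneousSubmodule (Fin N) k d)
    (I : Ideal (MvPolynomial (Fin N) k))
    (hI : ∀ f, f ∈ I ↔ apolar f g = 0) :
    Module.finrank k
      (Submodule.map (Ideal.Quotient.mkₐ k I).toLinearMap
        (homogeneousSubmodule (Fin N) k 1)) ≤ t ↔
    ∃ ℓ : Fin t → MvPolynomial (Fin N) k,
      (∀ i, ℓ i ∈ homogeneousSubmodule (Fin N) k 1) ∧
      g ∈ Algebra.adjoin k (Set.range ℓ) := by
  classical
  set q := (Ideal.Quotient.mkₐ k I).toLinearMap with hq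
  set T : (Fin N → k) →ₗ[k] MvPolynomial (Fin N) k :=
    ∑ i : Fin N, (LinearMap.toSpanSingleton k _ ((pderiv i) g)).comp (LinearMap.proj i) with hT
  have T_apply : ∀ c : Fin N → k, T c = ∑ i, c i • pderiv i g := by
    intro c
    simp [hT, LinearMap.sum_apply, LinearMap.toSpanSingleton_apply]
  have hmap : Submodule.map q (homogeneousSubmodule (Fin N) k 1)
      = LinearMap.range (q ∘ₗ Lmap k N) := by
    rw [LinearMap.range_comp, range_Lmap]
  have hker : LinearMap.ker (q ∘ₗ Lmap k N) = LinearMap.ker T := by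
    ext c
    simp only [LinearMap.mem_ker, LinearMap.comp_apply]
    have hq1 : q (Lmap k N c) = Ideal.Quotient.mk I (Lmap k N c) := rfl
    rw [hq1, Ideal.Quotient.eq_zero_iff_mem, hI, Lmap_apply, apolar_sum_smul_X, ← T_apply]
  have hrank : Module.finrank k (Submodule.map q (homogeneousSubmodule (Fin N) k 1))
      + Module.finrank k (LinearMap.ker T) = N := by
    rw [hmap, ← hker, LinearMap.finrank_range_add_finrank_ker, Module.finrank_fin_fun]
  have hkerle : Module.finrank k (LinearMap.ker T) ≤ N := by omega
  constructor
  · -- forward direction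
    intro hle
    set s : ℕ := N - Module.finrank k (LinearMap.ker T) with hs
    have hsN : s ≤ N := Nat.sub_le _ _
    have hst : s ≤ t := by omega
    have hfrC : Module.finrank k (LinearMap.ker T) = N - s := by omega
    obtain ⟨C', hcompl⟩ := Submodule.exists_isCompl (LinearMap.ker T)
    have hC' : Module.finrank k C' = s := by
      have h2 := Submodule.finrank_add_eq_of_isCompl hcompl
      rw [Module.finrank_fin_fun] at h2
      omega
    set bC := Module.finBasis k (LinearMap.ker T) with hbCdef
    set bC' := Module.finBasis k C' with hbC'def
    set e : (Fin (Module.finrank k C') ⊕ Fin (Module.finrank k (LinearMap.ker T))) ≃ Fin N :=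
      (Equiv.sumCongr (finCongr hC') (finCongr hfrC)).trans
        (finSumFinEquiv.trans (finCongr (by omega))) with he
    set b : Module.Basis (Fin N) k (Fin N → k) :=
      ((bC'.prod bC).map (Submodule.prodEquivOfIsCompl C' (LinearMap.ker T) hcompl.symm)).reindex e
      with hb
    have hbC : ∀ r : Fin N, s ≤ (r : ℕ) → b r ∈ LinearMap.ker T := by
      intro r hr
      have hj : (r : ℕ) - s < Module.finrank k (LinearMap.ker T) := by omega
      set j : Fin (Module.finrank k (LinearMap.ker T)) := ⟨(r : ℕ) - s, hj⟩ with hjdef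
      have hej : e (Sum.inr j) = r := by
        apply Fin.ext
        simp only [he, Equiv.trans_apply, Equiv.sumCongr_apply, Sum.map_inr,
          finSumFinEquiv_apply_right, finCongr_apply, Fin.coe_cast, Fin.coe_natAdd]
        have hjval : (j : ℕ) = (r : ℕ) - s := rfl
        omega
      have hbr : b r = (Submodule.prodEquivOfIsCompl C' (LinearMap.ker T) hcompl.symm)
          ((bC'.prod bC) (Sum.inr j)) := by
        rw [hb, Module.Basis.reindex_apply, ← hej, Equiv.symm_apply_apply, Module.Basis.map_apply]
      rw [hbr, Submodule.coe_prodEquivOfIsCompl', Module.Basis.prod_apply_inr_fst,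
        Module.Basis.prod_apply_inr_snd, ZeroMemClass.coe_zero, zero_add]
      exact (bC j).2
    set M : Matrix (Fin N) (Fin N) k := (Pi.basisFun k (Fin N)).toMatrix ⇑b with hM
    haveI : Invertible M := (Pi.basisFun k (Fin N)).invertibleToMatrix b
    have hMcol : ∀ r : Fin N, (fun i => M i r) = (b r : Fin N → k) := by
      intro r
      funext i
      rw [hM, Module.Basis.toMatrix_apply, Pi.basisFun_repr]
    set h := aeval (sigM M) g with hh
    have hpd : ∀ r : Fin N, s ≤ (r : ℕ) → pderiv r h = 0 := by
      intro r hr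
      rw [hh, pderiv_aeval_sigM]
      have h1 : (∑ i, M i r • pderiv i g) = T (fun i => M i r) := (T_apply _).symm
      rw [h1, hMcol r, LinearMap.mem_ker.mp (hbC r hr), map_zero]
    have hsupp : h ∈ MvPolynomial.supported k {r : Fin N | (r : ℕ) < s} := by
      rw [MvPolynomial.mem_supported]
      intro r hr
      by_contra hrs
      simp only [Set.mem_setOf_eq, not_lt] at hrs
      exact not_mem_vars_of_pderiv_eq_zero (hpd r hrs) hr
    rw [MvPolynomial.supported_eq_adjoin_X] at hsupp
    have hg' : g = aeval (sigM (⅟M)) h := by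
      rw [hh, aeval_sigM_sigM, mul_invOf_self, aeval_sigM_one]
    have hgadj : g ∈ Algebra.adjoin k
        ((aeval (sigM (⅟M)) : MvPolynomial (Fin N) k →ₐ[k] MvPolynomial (Fin N) k) ''
          (X '' {r : Fin N | (r : ℕ) < s})) := by
      rw [← AlgHom.map_adjoin]
      exact ⟨h, hsupp, hg'.symm⟩
    refine ⟨fun i => if hi : (i : ℕ) < s then sigM (⅟M) (⟨(i : ℕ), by omega⟩ : Fin N) else 0,
      ?_, ?_⟩
    · intro i
      dsimp only
      by_cases hi : (i : ℕ) < s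
      · rw [dif_pos hi]
        exact sigM_mem _ _
      · rw [dif_neg hi]
        exact Submodule.zero_mem _
    · refine Algebra.adjoin_mono ?_ hgadj
      rintro _ ⟨_, ⟨r, hrs, rfl⟩, rfl⟩
      simp only [Set.mem_setOf_eq] at hrs
      refine ⟨⟨(r : ℕ), lt_of_lt_of_le hrs hst⟩, ?_⟩
      dsimp only
      rw [dif_pos (show ((⟨(r : ℕ), lt_of_lt_of_le hrs hst⟩ : Fin t) : ℕ) < s from hrs)]
      rw [aeval_X]
  · -- backward direction
    rintro ⟨ℓ, hℓ, hg⟩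
    set Φ : (Fin N → k) →ₗ[k] (Fin t → k) := LinearMap.pi (fun j : Fin t =>
      ∑ i : Fin N, (MvPolynomial.coeff (Finsupp.single i 1) (ℓ j)) •
        (LinearMap.proj i : (Fin N → k) →ₗ[k] k)) with hΦ
    have hΦapp : ∀ (c : Fin N → k) (j : Fin t),
        Φ c j = ∑ i, MvPolynomial.coeff (Finsupp.single i 1) (ℓ j) * c i := by
      intro c j
      simp [hΦ, LinearMap.pi_apply, LinearMap.sum_apply, smul_eq_mul]
    have hΦker : LinearMap.ker Φ ≤ LinearMap.ker T := by
      intro c hc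
      rw [LinearMap.mem_ker] at hc ⊢
      rw [T_apply]
      have hder : ∀ p ∈ Algebra.adjoin k (Set.range ℓ),
          (∑ i, c i • pderiv i p : MvPolynomial (Fin N) k) = 0 := by
        intro p hp
        induction hp using Algebra.adjoin_induction with
        | mem x hx =>
          obtain ⟨j, rfl⟩ := hx
          have hw := eq_Lmap_of_homog (hℓ j)
          rw [hw]
          have : ∀ i : Fin N, c i • pderiv i (Lmap k N
              (fun l => MvPolynomial.coeff (Finsupp.single l 1) (ℓ j)))
              = C (MvPolynomial.coeff (Finsupp.single i 1) (ℓ j) * c i) := by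
            intro i
            rw [pderiv_Lmap, smul_eq_C_mul, ← C_mul, mul_comm]
          rw [Finset.sum_congr rfl fun i _ => this i, ← map_sum, ← hΦapp]
          have := congrFun hc j
          rw [this]
          exact C_0
        | algebraMap r =>
          have : (algebraMap k (MvPolynomial (Fin N) k)) r = C r := rfl
          rw [this]
          simp [pderiv_C]
        | add x y hx hy hpx hpy =>
          simp only [map_add, smul_add, Finset.sum_add_distrib, hpx, hpy, add_zero]
        | mul x y hx hy hpx hpy =>
          have : ∀ i : Fin N, c i • pderiv i (x * y) =
              (c i • pderiv i x) * y + x * (c i • pderiv i y) := by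
            intro i
            rw [pderiv_mul, smul_add, smul_mul_assoc, mul_smul_comm]
          rw [Finset.sum_congr rfl fun i _ => this i, Finset.sum_add_distrib,
            ← Finset.sum_mul, ← Finset.mul_sum, hpx, hpy, zero_mul, mul_zero, add_zero]
      exact hder g hg
    have h1 : Module.finrank k (LinearMap.ker Φ) ≤ Module.finrank k (LinearMap.ker T) :=
      Submodule.finrank_mono hΦker
    have h2 : Module.finrank k (LinearMap.range Φ) + Module.finrank k (LinearMap.ker Φ)
        = N := by
      rw [LinearMap.finrank_range_add_finrank_ker, Module.finrank_fin_fun]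
    have h3 : Module.finrank k (LinearMap.range Φ) ≤ t := by
      have h4 := (LinearMap.range Φ).finrank_le
      rwa [Module.finrank_fin_fun] at h4
    omega
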